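/- Let (Q_k) be a bounded real sequence with Q_{k+1} = Q_k + β_k Υ_k, where β_k ≥ 0. If liminf_{k₁→∞} inf_{k₂≥k₁} ∑_{k=k₁}^{k₂} β_k Υ_k ≥ 0, then (Q_k) converges. -/

import Mathlib

open Finset Filter

theorem bounded_asymptotic_monotone_convergence
    (Q Υ β : ℕ → ℝ)
    (hbdd : ∃ C : ℝ, ∀ k, |Q k| ≤ C)
    (hβ : ∀ k, 0 ≤ β k)
    (hrec : ∀ k, Q (k + 1) = Q k + β k * Υ k)
    (hliminf : ∀ ε > (0 : ℝ), ∃ K : ℕ, ∀ k₁ ≥ K, ∀ k₂ ≥ k₁,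
      (-ε : ℝ) ≤ ∑ k ∈ Icc k₁ k₂, β k * Υ k) :
    ∃ L : ℝ, Tendsto Q atTop (nhds L) := by
  obtain ⟨C, hC⟩ := hbdd
  -- telescoping identity
  have htel : ∀ m n, m ≤ n → Q n = Q m + ∑ k ∈ Ico m n, β k * Υ k := by
    intro m n hmn
    induction n with
    | zero => simp [Nat.le_zero.mp hmn]
    | succ n ih =>
      rcases Nat.lt_or_ge m (n + 1) with h | h
      · have hm : m ≤ n := Nat.lt_succ_iff.mp h
        rw [Finset.sum_Ico_succ_top hm, hrec n, ih hm]; ring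
      · have : m = n + 1 := le_antisymm hmn h
        simp [this]
  apply cauchySeq_tendsto_of_complete
  rw [Metric.cauchySeq_iff']
  intro ε hε
  have hε3 : (0:ℝ) < ε / 3 := by linarith
  obtain ⟨K, hK⟩ := hliminf (ε / 3) hε3
  -- lower bound: for n ≥ m ≥ K, Q n - Q m ≥ -ε/3
  have hlow : ∀ m n, K ≤ m → m ≤ n → -(ε/3) ≤ Q n - Q m := by
    intro m n hKm hmn
    rcases eq_or_lt_of_le hmn with rfl | hlt
    · simp; positivity
    · have h1 : m ≤ n - 1 := Nat.le_sub_one_of_lt hlt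
      have h2 : Ico m n = Icc m (n - 1) := by
        have hn1 : n = (n - 1) + 1 := by omega
        conv_lhs => rw [hn1, Finset.Ico_add_one_right_eq_Icc]
      have := hK m hKm (n - 1) h1
      rw [htel m n hmn, h2]
      linarith
  set S : Set ℝ := Q '' Set.Ici K with hS
  have hSne : S.Nonempty := ⟨Q K, K, le_refl K, rfl⟩
  have hSbdd : BddAbove S := by
    refine ⟨C, ?_⟩
    rintro x ⟨m, -, rfl⟩
    exact (abs_le.mp (hC m)).2
  obtain ⟨x, ⟨N, hNK, rfl⟩, hx⟩ := exists_lt_of_lt_csSup hSne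
    (show sSup S - ε/3 < sSup S by linarith)
  refine ⟨N, fun n hn => ?_⟩
  have hub : Q n ≤ sSup S := le_csSup hSbdd ⟨n, le_trans hNK hn, rfl⟩
  have hlb := hlow N n hNK hn
  rw [Real.dist_eq, abs_lt]
  constructor <;> linarith
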